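/- For all real numbers $b$ with $b+i > 0$ for $0 \le i \le 2n-2$, and positive integers $n$: $\det_{0\le i,j\le n-1}\big((j-i)\,\Gamma(b+i+j)\big)$ equals $0$ if $n$ is odd, and equals $\Big(\prod_{i=0}^{n-1} i!\,\Gamma(b+i)\Big)\frac{n!\,(b/2)_{n/2}}{(n/2)!}$ if $n$ is even. -/

import Mathlib

open Finset Matrix

/-- The Pochhammer symbol `(a)_m = a (a+1) ⋯ (a+m-1)`. -/
noncomputable def poch (a : ℝ) (m : ℕ) : ℝ := ∏ i ∈ Finset.range m, (a + i)

lemma poch_zero (a : ℝ) : poch a 0 = 1 := by simp [poch]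

lemma poch_succ (a : ℝ) (m : ℕ) : poch a (m+1) = poch a m * (a + m) := by
  simp [poch, Finset.prod_range_succ]

lemma poch_succ' (a : ℝ) (m : ℕ) : poch a (m+1) = a * poch (a+1) m := by
  rw [poch, Finset.prod_range_succ']
  simp only [Nat.cast_zero, add_zero]
  rw [mul_comm]
  congr 1
  · apply Finset.prod_congr rfl
    intro x _
    push_cast; ring

lemma poch_add (a : ℝ) (p q : ℕ) : poch a (p+q) = poch a p * poch (a+p) q := by
  induction q with
  | zero => simp [poch_zero]
  | succ q ih =>
      rw [← Nat.add_assoc, poch_succ, ih, poch_succ]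
      push_cast; ring

noncomputable def dfall (l i : ℕ) : ℝ := ∏ t ∈ Finset.range i, ((l:ℝ) - (t:ℝ))

lemma dfall_zero (l : ℕ) : dfall l 0 = 1 := by simp [dfall]

lemma dfall_succ (l i : ℕ) : dfall l (i+1) = dfall l i * ((l:ℝ) - i) := by
  simp [dfall, Finset.prod_range_succ]

lemma dfall_succ' (l i : ℕ) : dfall (l+1) (i+1) = ((l:ℝ)+1) * dfall l i := by
  rw [dfall, Finset.prod_range_succ']
  rw [mul_comm]
  congr 1
  · push_cast; ring
  · apply Finset.prod_congr rfl
    intro x _; push_cast; ring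

lemma dfall_self_zero (i : ℕ) : dfall 0 (i+1) = 0 := by
  rw [dfall, Finset.prod_range_succ']
  norm_num

lemma dfall_diff (l m : ℕ) : dfall (l+1) m - dfall l m = m * dfall l (m-1) := by
  cases m with
  | zero => simp [dfall_zero]
  | succ r =>
      rw [Nat.succ_sub_one, dfall_succ' l r, dfall_succ l r]
      push_cast
      ring

noncomputable def altsum (i : ℕ) (f : ℕ → ℝ) : ℝ :=
  ∑ k ∈ Finset.range (i+1), (-1:ℝ)^(i+k) * (i.choose k) * f k

lemma altsum_zero (f : ℕ → ℝ) : altsum 0 f = f 0 := by simp [altsum]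

lemma altsum_succ (i : ℕ) (f : ℕ → ℝ) :
    altsum (i+1) f = altsum i (fun k => f (k+1)) - altsum i f := by
  unfold altsum
  rw [Finset.sum_range_succ' (fun k => (-1:ℝ)^(i+1+k) * ((i+1).choose k) * f k) (i+1)]
  have h1 : ∀ k, ((i+1).choose (k+1) : ℝ) = (i.choose k : ℝ) + (i.choose (k+1) : ℝ) := by
    intro k; rw [Nat.choose_succ_succ]; push_cast; ring
  have key : ∑ k ∈ Finset.range (i+1), (-1:ℝ)^(i+1+(k+1)) * ((i+1).choose (k+1)) * f (k+1)
      = (∑ k ∈ Finset.range (i+1), (-1:ℝ)^(i+k) * (i.choose k) * f (k+1))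
        + ∑ k ∈ Finset.range (i+1), (-1:ℝ)^(i+k) * (i.choose (k+1)) * f (k+1) := by
    rw [← Finset.sum_add_distrib]
    apply Finset.sum_congr rfl
    intro k _
    rw [h1 k]
    have : (-1:ℝ)^(i+1+(k+1)) = (-1:ℝ)^(i+k) := by
      rw [show i+1+(k+1) = (i+k)+2 by ring, pow_add]; norm_num
    rw [this]; ring
  rw [key]
  have h2 : ∑ k ∈ Finset.range (i+1), (-1:ℝ)^(i+k) * (i.choose (k+1)) * f (k+1)
      = (∑ k ∈ Finset.range (i+1), (-1:ℝ)^(i+1+k) * (i.choose k) * f k)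
         - (-1:ℝ)^(i+1) * f 0 := by
    rw [Finset.sum_range_succ' (fun k => (-1:ℝ)^(i+1+k) * (i.choose k) * f k) i]
    have : ∑ k ∈ Finset.range (i+1), (-1:ℝ)^(i+k) * (i.choose (k+1)) * f (k+1)
        = ∑ k ∈ Finset.range (i+1), (-1:ℝ)^(i+1+(k+1)) * (i.choose (k+1)) * f (k+1) := by
      apply Finset.sum_congr rfl
      intro k _
      have : (-1:ℝ)^(i+1+(k+1)) = (-1:ℝ)^(i+k) := by
        rw [show i+1+(k+1) = (i+k)+2 by ring, pow_add]; norm_num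
      rw [this]
    rw [this]
    have hlast : ∑ k ∈ Finset.range (i+1), (-1:ℝ)^(i+1+(k+1)) * ↑(i.choose (k+1)) * f (k+1)
        = ∑ k ∈ Finset.range i, (-1:ℝ)^(i+1+(k+1)) * ↑(i.choose (k+1)) * f (k+1) := by
      rw [Finset.sum_range_succ]
      simp [Nat.choose_succ_self]
    rw [hlast]
    simp
  rw [h2]
  have h3 : ∑ k ∈ Finset.range (i+1), (-1:ℝ)^(i+1+k) * (i.choose k) * f k
      = - altsum i f := by
    unfold altsum
    rw [← Finset.sum_neg_distrib]
    apply Finset.sum_congr rfl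
    intro k _
    have : (-1:ℝ)^(i+1+k) = -(-1:ℝ)^(i+k) := by
      rw [show i+1+k = (i+k)+1 by ring, pow_succ]; ring
    rw [this]; ring
  rw [h3]
  unfold altsum
  simp
  ring

lemma altsum_congr (i : ℕ) (f g : ℕ → ℝ) (h : ∀ k, f k = g k) : altsum i f = altsum i g := by
  unfold altsum; exact Finset.sum_congr rfl (fun k _ => by rw [h k])

lemma altsum_sub (i : ℕ) (f g : ℕ → ℝ) :
    altsum i (fun k => f k - g k) = altsum i f - altsum i g := by
  unfold altsum
  rw [← Finset.sum_sub_distrib]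
  exact Finset.sum_congr rfl (fun k _ => by ring)

lemma altsum_mul (i : ℕ) (c : ℝ) (f : ℕ → ℝ) :
    altsum i (fun k => c * f k) = c * altsum i f := by
  unfold altsum
  rw [Finset.mul_sum]
  exact Finset.sum_congr rfl (fun k _ => by ring)

/-- Lemma A: finite difference of Pochhammer. -/
lemma altsum_poch : ∀ (i : ℕ) (b : ℝ) (l : ℕ),
    altsum i (fun k => poch (b + k) l) = dfall l i * poch (b + i) (l - i) := by
  intro i
  induction i with
  | zero => intro b l; rw [altsum_zero]; simp [dfall_zero]
  | succ i ih =>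
      intro b l
      rw [altsum_succ]
      have hdiff : ∀ k : ℕ, poch (b + (k+1:ℕ)) l - poch (b + k) l
          = (l:ℝ) * poch ((b+1) + k) (l-1) := by
        intro k
        cases l with
        | zero => simp [poch_zero]
        | succ m =>
            rw [Nat.succ_sub_one]
            have h1 : poch (b + (k+1:ℕ)) (m+1) = poch ((b+k)+1) (m+1) := by
              push_cast; ring_nf
            have h2 : poch (b+k) (m+1) = (b+k) * poch ((b+k)+1) m := poch_succ' _ m
            have h3 : poch ((b+k)+1) (m+1) = poch ((b+k)+1) m * ((b+k)+1+m) := poch_succ _ m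
            have h4 : ((b+1)+k : ℝ) = (b+k)+1 := by ring
            rw [h1, h2, h3, h4]
            push_cast
            ring
      have step1 : altsum i (fun k => poch (b + (k+1:ℕ)) l) - altsum i (fun k => poch (b + k) l)
          = (l:ℝ) * altsum i (fun k => poch ((b+1) + k) (l-1)) := by
        rw [← altsum_sub, ← altsum_mul]
        exact altsum_congr _ _ _ (fun k => by rw [← hdiff k])
      rw [step1, ih (b+1) (l-1)]
      cases l with
      | zero =>
          simp only [Nat.cast_zero, zero_mul, Nat.zero_sub]
          rw [dfall_self_zero]
          ring
      | succ m =>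
          rw [Nat.succ_sub_one, dfall_succ' m i]
          have : (m+1) - (i+1) = m - i := by omega
          rw [this]
          have : (b + 1 + (i:ℝ)) = b + ((i+1 : ℕ) : ℝ) := by push_cast; ring
          rw [this]
          push_cast
          ring

/-- Lemma B: j-th difference of falling factorial. -/
lemma altsum_dfall : ∀ (j m : ℕ),
    altsum j (fun l => dfall l m) = if m = j then (j.factorial : ℝ) else 0 := by
  intro j
  induction j with
  | zero =>
      intro m
      rw [altsum_zero]
      cases m with
      | zero => simp [dfall_zero]
      | succ r => simp [dfall_self_zero]
  | succ j ih =>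
      intro m
      rw [altsum_succ]
      have step1 : altsum j (fun l => dfall (l+1) m) - altsum j (fun l => dfall l m)
          = (m:ℝ) * altsum j (fun l => dfall l (m-1)) := by
        rw [← altsum_sub, ← altsum_mul]
        exact altsum_congr _ _ _ (fun l => by rw [← dfall_diff l m])
      rw [step1, ih (m-1)]
      cases m with
      | zero => simp
      | succ r =>
          rw [Nat.succ_sub_one]
          by_cases h : r = j
          · subst h
            simp [Nat.factorial_succ]
          · have h2 : ¬ (r + 1 = j + 1) := by omega
            simp [h, h2]

/-- Gamma via Pochhammer. -/
lemma Gamma_poch (b : ℝ) : ∀ (k : ℕ), (∀ t : ℕ, t < k → b + t ≠ 0) →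
    Real.Gamma (b + k) = poch b k * Real.Gamma b := by
  intro k
  induction k with
  | zero => intro _; simp [poch_zero]
  | succ k ih =>
      intro h
      have h1 : b + ((k+1 : ℕ):ℝ) = (b + k) + 1 := by push_cast; ring
      rw [h1, Real.Gamma_add_one (h k (by omega)), ih (fun t ht => h t (by omega)), poch_succ]
      ring


noncomputable def Tm (c : ℕ → ℝ) (n : ℕ) : Matrix (Fin n) (Fin n) ℝ :=
  Matrix.of fun i j =>
    (if (j:ℕ) = (i:ℕ)+1 then c (i:ℕ) else 0) - (if (i:ℕ) = (j:ℕ)+1 then c (j:ℕ) else 0)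

lemma Tm_apply (c : ℕ → ℝ) (n : ℕ) (i j : Fin n) :
    Tm c n i j = (if (j:ℕ) = (i:ℕ)+1 then c (i:ℕ) else 0)
      - (if (i:ℕ) = (j:ℕ)+1 then c (j:ℕ) else 0) := rfl

lemma det_Tm_step (c : ℕ → ℝ) (n : ℕ) :
    (Tm c (n+2)).det = (c 0)^2 * (Tm (fun k => c (k+2)) n).det := by
  rw [show (n+2) = (n+1)+1 from rfl, Matrix.det_succ_row_zero]
  rw [Finset.sum_eq_single (1 : Fin (n+2))]
  · have h01 : Tm c (n+2) 0 1 = c 0 := by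
      rw [Tm_apply]; norm_num
    rw [h01]
    have hB : (Tm c (n+2)).submatrix Fin.succ (Fin.succAbove 1) =
        ((Tm c (n+2)).submatrix Fin.succ (Fin.succAbove 1)) := rfl
    set B := (Tm c (n+2)).submatrix Fin.succ (Fin.succAbove 1) with hBdef
    have hdetB : B.det = - (c 0) * (Tm (fun k => c (k+2)) n).det := by
      rw [Matrix.det_succ_column_zero]
      rw [Finset.sum_eq_single (0 : Fin (n+1))]
      · have hB00 : B 0 0 = - c 0 := by
          rw [hBdef]
          simp only [Matrix.submatrix_apply]
          have h1 : (Fin.succAbove 1 (0 : Fin (n+1))) = (0 : Fin (n+2)) := by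
            have := Fin.succ_succAbove_zero (0 : Fin (n+1))
            simpa using this
          rw [h1, Tm_apply]
          simp [Fin.val_succ]
        rw [hB00]
        have hC : B.submatrix (Fin.succAbove 0) Fin.succ = Tm (fun k => c (k+2)) n := by
          ext i j
          rw [Matrix.submatrix_apply, Fin.succAbove_zero, hBdef, Matrix.submatrix_apply]
          have h2 : (Fin.succAbove 1 (j.succ)) = j.succ.succ := by
            have := Fin.succ_succAbove_succ (0 : Fin (n+1)) j
            simpa using this
          rw [h2, Tm_apply, Tm_apply]
          simp only [Fin.val_succ]
          have e1 : ((j:ℕ)+1+1 = (i:ℕ)+1+1+1) ↔ ((j:ℕ) = (i:ℕ)+1) := by omega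
          have e2 : ((i:ℕ)+1+1 = (j:ℕ)+1+1+1) ↔ ((i:ℕ) = (j:ℕ)+1) := by omega
          simp only [e1, e2]
        rw [hC]
        simp
      · intro b _ hb
        have hBb0 : B b 0 = 0 := by
          rw [hBdef]
          simp only [Matrix.submatrix_apply]
          have h1 : (Fin.succAbove 1 (0 : Fin (n+1))) = (0 : Fin (n+2)) := by
            have := Fin.succ_succAbove_zero (0 : Fin (n+1))
            simpa using this
          rw [h1, Tm_apply]
          have hb' : (b:ℕ) ≠ 0 := fun h => hb (by ext; simpa using h)
          simp only [Fin.val_succ, Fin.val_zero]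
          have e1 : ¬ ((0:ℕ) = (b:ℕ)+1+1) := by omega
          have e2 : ¬ ((b:ℕ)+1 = 0+1) := by omega
          simp [e1, e2, hb]
        rw [hBb0]; ring
      · intro h; exact absurd (Finset.mem_univ _) h
    rw [hdetB]
    simp
    ring
  · intro j _ hj
    have h0j : Tm c (n+2) 0 j = 0 := by
      rw [Tm_apply]
      have hj' : (j:ℕ) ≠ 1 := by
        intro h; exact hj (by ext; simpa using h)
      have e2 : ¬ ((0:ℕ) = (j:ℕ)+1) := by omega
      simp [hj', e2]
    rw [h0j]; ring
  · intro h; exact absurd (Finset.mem_univ _) h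

lemma det_Tm_even : ∀ (m : ℕ) (c : ℕ → ℝ),
    (Tm c (2*m)).det = ∏ k ∈ Finset.range m, (c (2*k))^2 := by
  intro m
  induction m with
  | zero => intro c; simp [Matrix.det_isEmpty]
  | succ m ih =>
      intro c
      rw [show 2*(m+1) = 2*m+2 from by ring, det_Tm_step, ih (fun k => c (k+2))]
      rw [Finset.prod_range_succ' (fun k => (c (2*k))^2) m]
      have h1 : ∀ k : ℕ, c (2*(k+1)) = c (2*k+2) := by
        intro k; congr 1
      simp only [mul_zero, h1]
      ring


noncomputable def Pm (b : ℝ) (i k : ℕ) : ℝ :=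
  (-1:ℝ)^(i+k) * (i.choose k) * poch (b + k) (i - k)

lemma Pm_eq_zero (b : ℝ) {i k : ℕ} (h : i < k) : Pm b i k = 0 := by
  simp [Pm, Nat.choose_eq_zero_of_lt h]

lemma dfall_eq_zero_of_lt {l i : ℕ} (h : l < i) : dfall l i = 0 := by
  apply Finset.prod_eq_zero (Finset.mem_range.2 h)
  simp

/-- Inner sum: `∑ₖ P i k Γ(b+k+l)`. -/
lemma innerA (b : ℝ) (n : ℕ) (hb : ∀ t : ℕ, t ≤ 2*n-2 → 0 < b + t)
    (i l : ℕ) (hi : i < n) (hl : l < n) :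
    ∑ k ∈ Finset.range n, Pm b i k * Real.Gamma (b + k + l)
      = Real.Gamma b * poch b i * (dfall l i * poch (b + i) (l - i)) := by
  have hsub : ∑ k ∈ Finset.range n, Pm b i k * Real.Gamma (b + k + l)
      = ∑ k ∈ Finset.range (i+1), Pm b i k * Real.Gamma (b + k + l) := by
    symm
    apply Finset.sum_subset
    · intro x hx
      simp only [Finset.mem_range] at *
      omega
    · intro x _ hx
      simp only [Finset.mem_range, not_lt] at hx
      rw [Pm_eq_zero b (by omega)]
      ring
  rw [hsub]
  have hterm : ∀ k ∈ Finset.range (i+1),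
      Pm b i k * Real.Gamma (b + k + l)
        = (Real.Gamma b * poch b i) * ((-1:ℝ)^(i+k) * (i.choose k) * poch (b + k) l) := by
    intro k hk
    have hki : k ≤ i := by simp only [Finset.mem_range] at hk; omega
    have hGamma : Real.Gamma (b + k + l) = poch b (k+l) * Real.Gamma b := by
      have hcast : b + (k:ℝ) + (l:ℝ) = b + ((k+l : ℕ) : ℝ) := by push_cast; ring
      rw [hcast]
      apply Gamma_poch
      intro t ht
      have : (0:ℝ) < b + t := hb t (by omega)
      linarith
    rw [hGamma, poch_add b k l]
    have hsplit : poch b k * poch (b + k) (i - k) = poch b i := by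
      rw [← poch_add b k (i-k)]
      congr 1
      omega
    rw [Pm]
    calc (-1:ℝ)^(i+k) * (i.choose k) * poch (b + k) (i - k) * (poch b k * poch (b+k) l * Real.Gamma b)
        = (Real.Gamma b * (poch b k * poch (b + k) (i - k))) * ((-1:ℝ)^(i+k) * (i.choose k) * poch (b+k) l) := by ring
      _ = (Real.Gamma b * poch b i) * ((-1:ℝ)^(i+k) * (i.choose k) * poch (b+k) l) := by rw [hsplit]
  rw [Finset.sum_congr rfl hterm, ← Finset.mul_sum]
  congr 1
  exact altsum_poch i b l

lemma poch_one (a : ℝ) : poch a 1 = a := by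
  rw [show (1:ℕ) = 0+1 from rfl, poch_succ, poch_zero]
  norm_num

/-- The full weighted sum `W i j`. -/
lemma Wval (b : ℝ) (n : ℕ) (hn : 0 < n) (hb : ∀ t : ℕ, t ≤ 2*n-2 → 0 < b + t)
    (i j : ℕ) (hi : i < n) (hj : j < n) :
    ∑ l ∈ Finset.range n, ((l:ℝ) * Pm b j l) *
        (∑ k ∈ Finset.range n, Pm b i k * Real.Gamma (b + k + l))
      = (if j = i+1 then (((i+1).factorial : ℝ)) * Real.Gamma (b + (i+1:ℕ)) else 0)
        + (if j = i then ((i:ℝ) * (i.factorial : ℝ)) * Real.Gamma (b + (i:ℕ)) else 0) := by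
  have hA : ∀ l ∈ Finset.range n,
      ((l:ℝ) * Pm b j l) * (∑ k ∈ Finset.range n, Pm b i k * Real.Gamma (b + k + l))
      = ((l:ℝ) * Pm b j l) * (Real.Gamma b * poch b i * (dfall l i * poch (b + i) (l - i))) := by
    intro l hl
    rw [innerA b n hb i l hi (Finset.mem_range.1 hl)]
  rw [Finset.sum_congr rfl hA]
  have hsub : ∑ l ∈ Finset.range n, ((l:ℝ) * Pm b j l) * (Real.Gamma b * poch b i * (dfall l i * poch (b + i) (l - i)))
      = ∑ l ∈ Finset.range (j+1), ((l:ℝ) * Pm b j l) * (Real.Gamma b * poch b i * (dfall l i * poch (b + i) (l - i))) := by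
    symm
    apply Finset.sum_subset
    · intro x hx; simp only [Finset.mem_range] at *; omega
    · intro x _ hx
      simp only [Finset.mem_range, not_lt] at hx
      rw [Pm_eq_zero b (by omega)]
      ring
  rw [hsub]
  have hterm : ∀ l ∈ Finset.range (j+1),
      ((l:ℝ) * Pm b j l) * (Real.Gamma b * poch b i * (dfall l i * poch (b + i) (l - i)))
      = (Real.Gamma b * poch b i * poch (b + i) (j - i)) *
          ((-1:ℝ)^(j+l) * (j.choose l) * ((l:ℝ) * dfall l i)) := by
    intro l hl
    have hlj : l ≤ j := by simp only [Finset.mem_range] at hl; omega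
    rw [Pm]
    rcases lt_or_ge l i with hli | hli
    · rw [dfall_eq_zero_of_lt hli]
      ring
    · have hsplit : poch (b + i) (l - i) * poch (b + l) (j - l) = poch (b + i) (j - i) := by
        have h1 : (l - i) + (j - l) = j - i := by omega
        have h2 : (b + (i:ℝ)) + ((l - i : ℕ) : ℝ) = b + (l:ℝ) := by
          rw [Nat.cast_sub hli]; ring
        rw [← h1, poch_add, h2]
      calc (l:ℝ) * ((-1:ℝ)^(j+l) * (j.choose l) * poch (b + l) (j - l)) *
            (Real.Gamma b * poch b i * (dfall l i * poch (b + i) (l - i)))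
          = (Real.Gamma b * poch b i * (poch (b + i) (l - i) * poch (b + l) (j - l))) *
              ((-1:ℝ)^(j+l) * (j.choose l) * ((l:ℝ) * dfall l i)) := by ring
        _ = _ := by rw [hsplit]
  rw [Finset.sum_congr rfl hterm, ← Finset.mul_sum]
  have hkey : ∑ l ∈ Finset.range (j+1), (-1:ℝ)^(j+l) * (j.choose l) * ((l:ℝ) * dfall l i)
      = (if i+1 = j then (j.factorial : ℝ) else 0) + (i:ℝ) * (if i = j then (j.factorial : ℝ) else 0) := by
    have hptw : ∀ l : ℕ, (l:ℝ) * dfall l i = dfall l (i+1) + (i:ℝ) * dfall l i := by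
      intro l
      rw [dfall_succ]
      ring
    have : ∑ l ∈ Finset.range (j+1), (-1:ℝ)^(j+l) * (j.choose l) * ((l:ℝ) * dfall l i)
        = (∑ l ∈ Finset.range (j+1), (-1:ℝ)^(j+l) * (j.choose l) * dfall l (i+1))
          + (i:ℝ) * ∑ l ∈ Finset.range (j+1), (-1:ℝ)^(j+l) * (j.choose l) * dfall l i := by
      rw [Finset.mul_sum, ← Finset.sum_add_distrib]
      apply Finset.sum_congr rfl
      intro l _
      rw [hptw l]
      ring
    rw [this]
    have e1 := altsum_dfall j (i+1)
    have e2 := altsum_dfall j i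
    unfold altsum at e1 e2
    rw [e1, e2]
  rw [hkey]
  by_cases h1 : j = i+1
  · subst h1
    simp only [if_pos rfl, if_neg (show ¬ i = i + 1 by omega),
      if_neg (show ¬ i + 1 = i by omega)]
    have hg : Real.Gamma (b + ((i+1 : ℕ):ℝ)) = poch b (i+1) * Real.Gamma b := by
      apply Gamma_poch
      intro t ht
      have : (0:ℝ) < b + t := hb t (by omega)
      linarith
    rw [hg]
    have : (i+1) - i = 1 := by omega
    rw [this, poch_one, poch_succ]
    push_cast
    ring
  · by_cases h2 : j = i
    · subst h2
      have h3 : ¬ (j + 1 = j) := by omega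
      simp only [if_neg h3, if_neg (by omega : ¬ j = j + 1), if_pos rfl]
      have hg : Real.Gamma (b + ((j : ℕ):ℝ)) = poch b j * Real.Gamma b := by
        apply Gamma_poch
        intro t ht
        have : (0:ℝ) < b + t := hb t (by omega)
        linarith
      rw [hg]
      have : j - j = 0 := by omega
      rw [this, poch_zero]
      simp only [if_true]
      ring
    · have h3 : ¬ (i + 1 = j) := by omega
      have h4 : ¬ (i = j) := by omega
      simp only [if_neg h1, if_neg h2, if_neg h3, if_neg h4]
      ring


section main
variable (b : ℝ) (n : ℕ)

noncomputable def Mmat : Matrix (Fin n) (Fin n) ℝ :=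
  Matrix.of fun i j : Fin n => ((j : ℝ) - (i : ℝ)) * Real.Gamma (b + (i : ℝ) + (j : ℝ))

noncomputable def Pmat : Matrix (Fin n) (Fin n) ℝ :=
  Matrix.of fun i j : Fin n => Pm b (i:ℕ) (j:ℕ)

lemma conj_eq (hn : 0 < n) (hb : ∀ t : ℕ, t ≤ 2*n-2 → 0 < b + t) :
    Pmat b n * Mmat b n * (Pmat b n)ᵀ
      = Tm (fun k => (((k+1).factorial : ℝ)) * Real.Gamma (b + (k+1:ℕ))) n := by
  ext i j
  rw [Matrix.mul_apply]
  have hentry : ∀ l : Fin n, (Pmat b n * Mmat b n) i l * (Pmat b n)ᵀ l j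
      = (∑ k ∈ Finset.range n,
          Pm b (i:ℕ) k * (((l:ℕ):ℝ) - (k:ℝ)) * Real.Gamma (b + (k:ℝ) + ((l:ℕ):ℝ))) * Pm b (j:ℕ) (l:ℕ) := by
    intro l
    rw [Matrix.transpose_apply, Matrix.mul_apply]
    congr 1
    rw [← Fin.sum_univ_eq_sum_range (fun k => Pm b (i:ℕ) k * (((l:ℕ):ℝ) - (k:ℝ)) * Real.Gamma (b + (k:ℝ) + ((l:ℕ):ℝ))) n]
    apply Finset.sum_congr rfl
    intro k _
    simp only [Pmat, Mmat, Matrix.of_apply]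
    ring
  calc ∑ l : Fin n, (Pmat b n * Mmat b n) i l * (Pmat b n)ᵀ l j
      = ∑ l ∈ Finset.range n, (∑ k ∈ Finset.range n,
          Pm b (i:ℕ) k * ((l:ℝ) - (k:ℝ)) * Real.Gamma (b + (k:ℝ) + (l:ℝ))) * Pm b (j:ℕ) l := by
        rw [← Fin.sum_univ_eq_sum_range (fun l => (∑ k ∈ Finset.range n,
          Pm b (i:ℕ) k * ((l:ℝ) - (k:ℝ)) * Real.Gamma (b + (k:ℝ) + (l:ℝ))) * Pm b (j:ℕ) l) n]
        exact Finset.sum_congr rfl (fun l _ => hentry l)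
    _ = (∑ l ∈ Finset.range n, ((l:ℝ) * Pm b (j:ℕ) l) *
          (∑ k ∈ Finset.range n, Pm b (i:ℕ) k * Real.Gamma (b + k + l)))
        - (∑ l ∈ Finset.range n, ((l:ℝ) * Pm b (i:ℕ) l) *
          (∑ k ∈ Finset.range n, Pm b (j:ℕ) k * Real.Gamma (b + k + l))) := by
        have split : ∀ l ∈ Finset.range n, (∑ k ∈ Finset.range n,
              Pm b (i:ℕ) k * ((l:ℝ) - (k:ℝ)) * Real.Gamma (b + (k:ℝ) + (l:ℝ))) * Pm b (j:ℕ) l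
            = (((l:ℝ) * Pm b (j:ℕ) l) * (∑ k ∈ Finset.range n, Pm b (i:ℕ) k * Real.Gamma (b + k + l)))
              - (∑ k ∈ Finset.range n, ((k:ℝ) * Pm b (i:ℕ) k) * (Pm b (j:ℕ) l * Real.Gamma (b + k + l))) := by
          intro l _
          rw [Finset.sum_mul, Finset.mul_sum, ← Finset.sum_sub_distrib]
          apply Finset.sum_congr rfl
          intro k _
          ring
        rw [Finset.sum_congr rfl split, Finset.sum_sub_distrib]
        congr 1
        rw [Finset.sum_comm]
        apply Finset.sum_congr rfl
        intro k _
        rw [Finset.mul_sum]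
        apply Finset.sum_congr rfl
        intro l _
        have harg : b + (l:ℝ) + (k:ℝ) = b + (k:ℝ) + (l:ℝ) := by ring
        rw [harg]
    _ = _ := by
        rw [Wval b n hn hb (i:ℕ) (j:ℕ) i.isLt j.isLt, Wval b n hn hb (j:ℕ) (i:ℕ) j.isLt i.isLt]
        simp only [Tm_apply]
        by_cases hij : (i:ℕ) = (j:ℕ)
        · rw [hij]
          simp
        · simp only [if_neg hij, if_neg (show ¬ (j:ℕ) = (i:ℕ) from fun h => hij h.symm)]
          ring

lemma det_Pmat : (Pmat b n).det = 1 := by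
  have htri : (Pmat b n).BlockTriangular OrderDual.toDual := by
    intro i j hij
    exact Pm_eq_zero b (show (i:ℕ) < (j:ℕ) from hij)
  rw [Matrix.det_of_lowerTriangular _ htri]
  apply Finset.prod_eq_one
  intro i _
  show Pm b (i:ℕ) (i:ℕ) = 1
  rw [Pm]
  simp [Nat.sub_self, poch_zero, Even.neg_one_pow (⟨(i:ℕ), rfl⟩ : Even ((i:ℕ)+(i:ℕ)))]

lemma det_eq_det_Tm (hn : 0 < n) (hb : ∀ t : ℕ, t ≤ 2*n-2 → 0 < b + t) :
    (Mmat b n).det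
      = (Tm (fun k => (((k+1).factorial : ℝ)) * Real.Gamma (b + (k+1:ℕ))) n).det := by
  rw [← conj_eq b n hn hb]
  rw [Matrix.det_mul, Matrix.det_mul, Matrix.det_transpose, det_Pmat]
  ring

end main


lemma prodid : ∀ (m : ℕ) (b : ℝ), (∀ t : ℕ, t < 2*m → 0 < b + t) →
    (∏ k ∈ Finset.range m,
        (((2*k+1).factorial : ℝ) * Real.Gamma (b + ((2*k+1 : ℕ):ℝ)))^2) * (m.factorial : ℝ)
    = (∏ i ∈ Finset.range (2*m), (i.factorial : ℝ) * Real.Gamma (b + (i:ℕ)))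
        * (((2*m).factorial : ℝ) * poch (b/2) m) := by
  intro m
  induction m with
  | zero => intro b _; simp [poch]
  | succ m ih =>
      intro b hpos
      have ihm := ih b (fun t ht => hpos t (by omega))
      have hΓ : Real.Gamma (b + ((2*m+1 : ℕ):ℝ)) = (b + ((2*m : ℕ):ℝ)) * Real.Gamma (b + ((2*m:ℕ):ℝ)) := by
        have h1 : b + ((2*m+1 : ℕ):ℝ) = (b + ((2*m:ℕ):ℝ)) + 1 := by push_cast; ring
        rw [h1, Real.Gamma_add_one (ne_of_gt (hpos (2*m) (by omega)))]
      rw [Finset.prod_range_succ, show 2*(m+1) = (2*m)+1+1 from by ring,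
        Finset.prod_range_succ, Finset.prod_range_succ, poch_succ, hΓ]
      have e1 : (((2*m+1).factorial : ℕ):ℝ) = (2*(m:ℝ)+1) * (((2*m).factorial : ℕ):ℝ) := by
        rw [Nat.factorial_succ]; push_cast; ring
      have e2 : (((2*m+1+1).factorial : ℕ):ℝ) = (2*(m:ℝ)+2) * (((2*m+1).factorial : ℕ):ℝ) := by
        rw [Nat.factorial_succ]; push_cast; ring
      have e3 : (((m+1).factorial : ℕ):ℝ) = ((m:ℝ)+1) * ((m.factorial : ℕ):ℝ) := by
        rw [Nat.factorial_succ]; push_cast; ring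
      push_cast
      push_cast at ihm
      rw [e2, e1, e3]
      linear_combination ((2*(m:ℝ)+1)^2 * (((2*m).factorial : ℕ):ℝ)^2 * (b+2*(m:ℝ))^2
        * Real.Gamma (b+2*(m:ℝ))^2 * ((m:ℝ)+1)) * ihm

theorem stmt_11 (b : ℝ) (n : ℕ) (hn : 0 < n)
    (hb : ∀ i : ℕ, i ≤ 2 * n - 2 → 0 < b + i) :
    (Odd n →
      Matrix.det (Matrix.of fun i j : Fin n =>
          ((j : ℝ) - (i : ℝ)) * Real.Gamma (b + (i : ℝ) + (j : ℝ))) = 0) ∧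
    (Even n →
      Matrix.det (Matrix.of fun i j : Fin n =>
          ((j : ℝ) - (i : ℝ)) * Real.Gamma (b + (i : ℝ) + (j : ℝ))) =
        (∏ i ∈ Finset.range n, (i.factorial : ℝ) * Real.Gamma (b + i)) *
          ((n.factorial : ℝ) * poch (b / 2) (n / 2) / ((n / 2).factorial : ℝ))) := by
  constructor
  · intro hodd
    have hskew : (Mmat b n)ᵀ = - (Mmat b n) := by
      ext i j
      simp only [Mmat, Matrix.transpose_apply, Matrix.of_apply, Matrix.neg_apply]
      have harg : b + (j:ℝ) + (i:ℝ) = b + (i:ℝ) + (j:ℝ) := by ring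
      rw [harg]
      ring
    have h1 : (Mmat b n).det = (-1:ℝ)^n * (Mmat b n).det := by
      conv_lhs => rw [← Matrix.det_transpose (Mmat b n), hskew]
      rw [Matrix.det_neg, Fintype.card_fin]
    rw [Odd.neg_one_pow hodd] at h1
    show (Mmat b n).det = 0
    linarith
  · intro heven
    obtain ⟨m, hm⟩ := heven
    have hm2 : n = 2 * m := by omega
    subst hm2
    have hdiv : 2 * m / 2 = m := by omega
    show (Mmat b (2*m)).det = _
    rw [det_eq_det_Tm b (2*m) hn hb, det_Tm_even m _, hdiv]
    have hprod : ∏ k ∈ Finset.range m,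
        ((fun k => (((k+1).factorial : ℕ):ℝ) * Real.Gamma (b + (k+1:ℕ))) (2*k))^2
        = ∏ k ∈ Finset.range m,
          ((((2*k+1).factorial : ℕ):ℝ) * Real.Gamma (b + ((2*k+1 : ℕ):ℝ)))^2 := by
      apply Finset.prod_congr rfl
      intro k _
      norm_num
    rw [hprod]
    have hmfac : ((m.factorial : ℕ):ℝ) ≠ 0 := by
      exact_mod_cast m.factorial_ne_zero
    have key := prodid m b (fun t ht => hb t (by omega))
    field_simp
    push_cast at key
    push_cast
    simp only [mul_pow, ← add_assoc] at key ⊢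
    linear_combination key
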